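/- Average entropy after an inefficient measurement exceeds the input entropy by at most the log-inefficiency: for a quantum instrument {T_k} with Kraus decompositions T_k(ρ) = ∑_{i=1}^{I(k)} M_{ki} ρ M_{ki}†, max_k I(k) ≤ I, and ∑_{k,i} M_{ki}† M_{ki} = 𝟙, one has ∑_k p_k S(ρ'_{S,k}) ≤ ln I + S(ρ_S), where p_k = tr[∑_i M_{ki} ρ_S M_{ki}†] and ρ'_{S,k} = ∑_i M_{ki} ρ_S M_{ki}† / p_k (sum over k with p_k > 0). -/

import Mathlib

open scoped ComplexOrder

/-- Von Neumann entropy `S(A) = -tr[A ln A]`, via eigenvalues of a Hermitian matrix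
(convention `0 ln 0 = 0`), junk value `0` on non-Hermitian matrices. -/
noncomputable def vNEntropy {n : Type*} [Fintype n] [DecidableEq n]
    (A : Matrix n n ℂ) : ℝ :=
  if h : A.IsHermitian then ∑ i, Real.negMulLog (h.eigenvalues i) else 0

open Matrix
open scoped Classical

lemma jensen_negMulLog {ι : Type*} (t : Finset ι) (w x : ι → ℝ)
    (hw : ∀ i ∈ t, 0 ≤ w i) (hx : ∀ i ∈ t, 0 ≤ x i) (hsum : ∑ i ∈ t, w i ≤ 1) :
    ∑ i ∈ t, w i * Real.negMulLog (x i) ≤ Real.negMulLog (∑ i ∈ t, w i * x i) := by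
  have h := Real.concaveOn_negMulLog.map_add_sum_le (t := t) (w := w) (p := x)
      (v := 1 - ∑ i ∈ t, w i) (q := 0) hw (by ring)
      (fun i hi => Set.mem_Ici.2 (hx i hi)) (by linarith) (Set.mem_Ici.2 le_rfl)
  simpa [Real.negMulLog_zero, smul_eq_mul] using h

lemma sum_negMulLog_le {m : ℕ} (x : Fin m → ℝ) (hx : ∀ i, 0 ≤ x i) :
    ∑ i, Real.negMulLog (x i) ≤ Real.negMulLog (∑ i, x i) + (∑ i, x i) * Real.log m := by
  by_cases hs : ∑ i, x i = 0
  · have hz : ∀ i, x i = 0 := fun i => le_antisymm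
      (hs ▸ Finset.single_le_sum (fun j _ => hx j) (Finset.mem_univ i)) (hx i)
    simp [hz, hs]
  · have hm : m ≠ 0 := by
      rintro rfl
      exact hs (by simp)
    have hmR : (0:ℝ) < m := by positivity
    have hspos : 0 < ∑ i, x i :=
      lt_of_le_of_ne (Finset.sum_nonneg fun i _ => hx i) (Ne.symm hs)
    have hj := jensen_negMulLog Finset.univ (fun _ => (m:ℝ)⁻¹) x
      (fun i _ => by positivity) (fun i _ => hx i)
      (by simp [Finset.card_univ]; rw [mul_inv_cancel₀ (ne_of_gt hmR)])
    have h1 : ∑ i, (m:ℝ)⁻¹ * Real.negMulLog (x i)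
        = (m:ℝ)⁻¹ * ∑ i, Real.negMulLog (x i) := by rw [Finset.mul_sum]
    have h2 : ∑ i, (m:ℝ)⁻¹ * x i = (m:ℝ)⁻¹ * ∑ i, x i := by rw [Finset.mul_sum]
    rw [h1, h2] at hj
    have := mul_le_mul_of_nonneg_left hj (le_of_lt hmR)
    rw [← mul_assoc, mul_inv_cancel₀ (ne_of_gt hmR), one_mul] at this
    refine this.trans (le_of_eq ?_)
    rw [Real.negMulLog, Real.negMulLog, Real.log_mul (by positivity) hs,
      Real.log_inv]
    field_simp
    ring

lemma vNEntropy_mul_conjTranspose_le {n m : Type*} [Fintype n] [Fintype m]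
    [DecidableEq n] (B : Matrix n m ℂ) :
    vNEntropy (B * Bᴴ) ≤ ∑ c, Real.negMulLog (∑ s, Complex.normSq (B s c)) := by
  have hσ : (B * Bᴴ).PosSemidef := posSemidef_self_mul_conjTranspose B
  have hH := hσ.1
  set lam : n → ℝ := hH.eigenvalues with hlamdef
  have hlam : ∀ i, 0 ≤ lam i := hσ.eigenvalues_nonneg
  set U : Matrix n n ℂ := (hH.eigenvectorUnitary : Matrix n n ℂ) with hU
  have hUU : Uᴴ * U = 1 := by
    rw [← Matrix.star_eq_conjTranspose]
    exact (Matrix.mem_unitaryGroup_iff').mp hH.eigenvectorUnitary.2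
  have hUU' : U * Uᴴ = 1 := by
    rw [← Matrix.star_eq_conjTranspose]
    exact (Matrix.mem_unitaryGroup_iff).mp hH.eigenvectorUnitary.2
  set V : Matrix m n ℂ := Bᴴ * U with hV
  have hdiag : Vᴴ * V = diagonal (fun i => (lam i : ℂ)) := by
    have h : star (hH.eigenvectorUnitary : Matrix n n ℂ) * (B * Bᴴ)
        * (hH.eigenvectorUnitary : Matrix n n ℂ) = diagonal (RCLike.ofReal ∘ hH.eigenvalues) := by
      have hst := hH.spectral_theorem
      rw [Unitary.conjStarAlgAut_apply] at hst
      refine (congrArg (fun X => star (hH.eigenvectorUnitary : Matrix n n ℂ) * X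
        * (hH.eigenvectorUnitary : Matrix n n ℂ)) hst).trans ?_
      simp only [← Matrix.mul_assoc, Unitary.coe_star_mul_self, Matrix.one_mul]
      simp only [Matrix.mul_assoc, Unitary.coe_star_mul_self, Matrix.mul_one]
    rw [Matrix.star_eq_conjTranspose] at h
    calc Vᴴ * V = Uᴴ * (B * Bᴴ) * U := by
          rw [hV, conjTranspose_mul, conjTranspose_conjTranspose]
          simp only [Matrix.mul_assoc]
      _ = diagonal (fun i => (lam i : ℂ)) := by rw [hU, h]; rfl
  have hcol : ∀ i, ∑ c, Complex.normSq (V c i) = lam i := by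
    intro i
    have h1 : (Vᴴ * V) i i = ((lam i : ℝ) : ℂ) := by rw [hdiag]; simp
    have h2 : (Vᴴ * V) i i = ((∑ c, Complex.normSq (V c i) : ℝ) : ℂ) := by
      rw [Matrix.mul_apply]
      push_cast
      refine Finset.sum_congr rfl fun c _ => ?_
      rw [conjTranspose_apply, Complex.star_def, mul_comm, Complex.mul_conj]
    exact Complex.ofReal_inj.mp (h2.symm.trans h1)
  have hVV : V * Vᴴ = Bᴴ * B := by
    calc V * Vᴴ = Bᴴ * (U * Uᴴ) * B := by
          rw [hV, conjTranspose_mul, conjTranspose_conjTranspose]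
          simp only [Matrix.mul_assoc]
      _ = Bᴴ * B := by rw [hUU']; rw [Matrix.mul_one]
  have hq : ∀ c, ∑ s, Complex.normSq (B s c) = ∑ i, Complex.normSq (V c i) := by
    intro c
    have h1 : (V * Vᴴ) c c = ((∑ i, Complex.normSq (V c i) : ℝ) : ℂ) := by
      rw [Matrix.mul_apply]
      push_cast
      refine Finset.sum_congr rfl fun i _ => ?_
      rw [conjTranspose_apply, Complex.star_def, Complex.mul_conj]
    have h2 : (Bᴴ * B) c c = ((∑ s, Complex.normSq (B s c) : ℝ) : ℂ) := by
      rw [Matrix.mul_apply]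
      push_cast
      refine Finset.sum_congr rfl fun s _ => ?_
      rw [conjTranspose_apply, Complex.star_def, mul_comm, Complex.mul_conj]
    exact Complex.ofReal_inj.mp (h2.symm.trans (hVV ▸ h1))
  set D : m → n → ℝ := fun c i => Complex.normSq (V c i) / lam i with hD
  have hD0 : ∀ c i, 0 ≤ D c i := fun c i => div_nonneg (Complex.normSq_nonneg _) (hlam i)
  have hzero : ∀ i, lam i = 0 → ∀ c, Complex.normSq (V c i) = 0 := by
    intro i hi c
    have h := hcol i
    rw [hi] at h
    exact (Finset.sum_eq_zero_iff_of_nonneg (fun c _ => Complex.normSq_nonneg _)).mp h c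
      (Finset.mem_univ c)
  have hDlam : ∀ c i, D c i * lam i = Complex.normSq (V c i) := by
    intro c i
    by_cases hi : lam i = 0
    · rw [hi, hzero i hi c, mul_zero]
    · rw [hD]; field_simp
  have hDcol : ∀ i, lam i ≠ 0 → ∑ c, D c i = 1 := by
    intro i hi
    rw [hD]
    simp only
    rw [← Finset.sum_div, hcol i, div_self hi]
  -- Bessel: row sums at most 1
  set L : Matrix n n ℂ := diagonal (fun i => (((lam i)⁻¹ : ℝ) : ℂ)) with hL
  set P : Matrix m m ℂ := V * L * Vᴴ with hPdef
  have hPP : P * P = P := by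
    have key : L * diagonal (fun i => (lam i : ℂ)) * L = L := by
      rw [hL, diagonal_mul_diagonal, diagonal_mul_diagonal]
      refine congrArg Matrix.diagonal (funext fun i => ?_)
      by_cases hi : lam i = 0
      · simp [hi]
      · push_cast
        field_simp
    calc P * P = V * (L * (Vᴴ * V) * L) * Vᴴ := by
          rw [hPdef]; simp only [Matrix.mul_assoc]
      _ = P := by rw [hdiag, key]
  have hLH : Lᴴ = L := by
    rw [hL, diagonal_conjTranspose]
    refine congrArg Matrix.diagonal (funext fun i => ?_)
    simp
  have hPherm : Pᴴ = P := by
    rw [hPdef]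
    rw [conjTranspose_mul (V * L) Vᴴ, conjTranspose_mul V L, conjTranspose_conjTranspose, hLH]
    simp only [Matrix.mul_assoc]
  have hproj : (1 - P) = (1 - P)ᴴ * (1 - P) := by
    rw [conjTranspose_sub, conjTranspose_one, hPherm, mul_sub, sub_mul, sub_mul, hPP]
    simp only [mul_one, one_mul]
    abel
  have hPSD : (1 - P).PosSemidef := hproj ▸ posSemidef_conjTranspose_mul_self (1 - P)
  have hrow : ∀ c, ∑ i, D c i ≤ 1 := by
    intro c
    have hPcc : P c c = ((∑ i, D c i : ℝ) : ℂ) := by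
      rw [hPdef, Matrix.mul_apply]
      push_cast
      refine Finset.sum_congr rfl fun i _ => ?_
      rw [Matrix.mul_diagonal, conjTranspose_apply, Complex.star_def, hD]
      simp only
      rw [div_eq_mul_inv, mul_comm (V c i)]
      push_cast
      rw [← Complex.mul_conj]
      ring
    have h := hPSD.dotProduct_mulVec_nonneg (Pi.single c 1)
    have hdot : dotProduct (star (Pi.single c 1)) ((1 - P) *ᵥ (Pi.single c 1)) = (1 - P) c c := by
      simp [dotProduct, mulVec, Pi.single_apply, Finset.sum_ite_eq', mul_ite, ite_mul]
    rw [hdot] at h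
    have h2 : (1 - P) c c = ((1 - ∑ i, D c i : ℝ) : ℂ) := by
      rw [Matrix.sub_apply, Matrix.one_apply_eq, hPcc]
      push_cast
      ring
    rw [h2] at h
    have := Complex.zero_le_real.mp h
    linarith
  -- assemble
  have hent : vNEntropy (B * Bᴴ) = ∑ i, Real.negMulLog (lam i) := by
    rw [vNEntropy, dif_pos hH]
  rw [hent]
  calc ∑ i, Real.negMulLog (lam i) = ∑ i, (∑ c, D c i) * Real.negMulLog (lam i) := by
        refine Finset.sum_congr rfl fun i _ => ?_
        by_cases hi : lam i = 0
        · simp [hi]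
        · rw [hDcol i hi, one_mul]
    _ = ∑ c, ∑ i, D c i * Real.negMulLog (lam i) := by
        rw [Finset.sum_comm]
        exact Finset.sum_congr rfl fun i _ => Finset.sum_mul _ _ _
    _ ≤ ∑ c, Real.negMulLog (∑ i, D c i * lam i) := Finset.sum_le_sum fun c _ =>
        jensen_negMulLog _ _ _ (fun i _ => hD0 c i) (fun i _ => hlam i) (hrow c)
    _ = ∑ c, Real.negMulLog (∑ s, Complex.normSq (B s c)) := by
        refine Finset.sum_congr rfl fun c _ => ?_
        rw [hq c]
        congr 1
        exact Finset.sum_congr rfl fun i _ => hDlam c i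

/-- Average entropy after an inefficient measurement exceeds the input entropy by at most
the log-inefficiency: for a quantum instrument with Kraus operators `M_{ki}`,
`i ∈ [I(k)]`, `I(k) ≤ I`, and `∑_{k,i} M_{ki}† M_{ki} = 𝟙`, one has
`∑_k p_k S(ρ'_{S,k}) ≤ ln I + S(ρ_S)` (sum over outcomes with `p_k > 0`). -/
theorem avg_post_measurement_entropy_le_log_inefficiency
    {n : Type*} [Fintype n] [DecidableEq n] {K I : ℕ}
    (I' : Fin K → ℕ) (hI' : ∀ k, I' k ≤ I)
    (M : (k : Fin K) → Fin (I' k) → Matrix n n ℂ)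
    (hM : ∑ k, ∑ i, (M k i)ᴴ * M k i = 1)
    (ρ : Matrix n n ℂ) (hρ : ρ.PosSemidef) (hρtr : ρ.trace = 1) :
    let p : Fin K → ℝ := fun k => ((∑ i, M k i * ρ * (M k i)ᴴ).trace).re
    ∑ k ∈ Finset.univ.filter (fun k => 0 < p k),
        p k * vNEntropy ((((p k)⁻¹ : ℝ) : ℂ) • ∑ i, M k i * ρ * (M k i)ᴴ)
      ≤ Real.log I + vNEntropy ρ := by
  intro p
  have hH := hρ.1
  set lam : n → ℝ := hH.eigenvalues with hlamdef
  have hlam : ∀ r, 0 ≤ lam r := hρ.eigenvalues_nonneg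
  set U : Matrix n n ℂ := (hH.eigenvectorUnitary : Matrix n n ℂ) with hU
  have hUU : Uᴴ * U = 1 := by
    rw [← Matrix.star_eq_conjTranspose]
    exact (Matrix.mem_unitaryGroup_iff').mp hH.eigenvectorUnitary.2
  set A : Matrix n n ℂ := U * diagonal (fun r => ((Real.sqrt (lam r) : ℝ) : ℂ)) with hA
  have hdc : (star fun r => ((Real.sqrt (lam r) : ℝ) : ℂ))
      = fun r => ((Real.sqrt (lam r) : ℝ) : ℂ) := by
    funext r
    simp
  have hdd : diagonal (fun r => ((Real.sqrt (lam r) : ℝ) : ℂ))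
      * diagonal (fun r => ((Real.sqrt (lam r) : ℝ) : ℂ)) = diagonal (fun r => ((lam r : ℝ) : ℂ)) := by
    rw [diagonal_mul_diagonal]
    refine congrArg Matrix.diagonal (funext fun r => ?_)
    rw [← Complex.ofReal_mul, Real.mul_self_sqrt (hlam r)]
  have hAA : A * Aᴴ = ρ := by
    have hst := hH.spectral_theorem
    rw [Unitary.conjStarAlgAut_apply, Matrix.star_eq_conjTranspose] at hst
    calc A * Aᴴ = U * (diagonal (fun r => ((Real.sqrt (lam r) : ℝ) : ℂ))
          * diagonal (fun r => ((Real.sqrt (lam r) : ℝ) : ℂ))) * Uᴴ := by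
          rw [hA, conjTranspose_mul, diagonal_conjTranspose, hdc]
          simp only [Matrix.mul_assoc]
      _ = U * diagonal (fun r => ((lam r : ℝ) : ℂ)) * Uᴴ := by rw [hdd]
      _ = ρ := by rw [hU]; exact hst.symm
  have hAtA : Aᴴ * A = diagonal (fun r => ((lam r : ℝ) : ℂ)) := by
    calc Aᴴ * A = diagonal (fun r => ((Real.sqrt (lam r) : ℝ) : ℂ)) * (Uᴴ * U)
          * diagonal (fun r => ((Real.sqrt (lam r) : ℝ) : ℂ)) := by
          rw [hA, conjTranspose_mul, diagonal_conjTranspose, hdc]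
          simp only [Matrix.mul_assoc]
      _ = diagonal (fun r => ((lam r : ℝ) : ℂ)) := by
          rw [hUU, Matrix.mul_one, hdd]
  set M' : Fin K → Fin I → Matrix n n ℂ := fun k i =>
    if h : (i : ℕ) < I' k then M k ⟨i, h⟩ else 0 with hM'def
  have hpad : ∀ (k : Fin K) (G : Matrix n n ℂ → Matrix n n ℂ), G 0 = 0 →
      ∑ i : Fin (I' k), G (M k i) = ∑ i : Fin I, G (M' k i) := by
    intro k G hG
    have h1 : ∑ i : Fin (I' k), G (M k i)
        = ∑ j ∈ Finset.range (I' k), (fun j => if h : j < I' k then G (M k ⟨j, h⟩) else 0) j := by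
      rw [← Fin.sum_univ_eq_sum_range]
      refine Finset.sum_congr rfl fun i _ => ?_
      show G (M k i) = if h : (i : ℕ) < I' k then G (M k ⟨(i : ℕ), h⟩) else 0
      rw [dif_pos i.isLt]
    have h2 : ∑ i : Fin I, G (M' k i)
        = ∑ j ∈ Finset.range I, (fun j => if h : j < I' k then G (M k ⟨j, h⟩) else 0) j := by
      rw [← Fin.sum_univ_eq_sum_range]
      refine Finset.sum_congr rfl fun i _ => ?_
      show G (if h : (i : ℕ) < I' k then M k ⟨(i : ℕ), h⟩ else 0)
          = if h : (i : ℕ) < I' k then G (M k ⟨(i : ℕ), h⟩) else 0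
      by_cases h : (i : ℕ) < I' k
      · rw [dif_pos h, dif_pos h]
      · rw [dif_neg h, dif_neg h, hG]
    rw [h1, h2]
    exact Finset.sum_subset (Finset.range_subset_range.2 (hI' k))
      (fun j _ hj => dif_neg (by simpa using hj))
  have hM'sum : ∑ k, ∑ i : Fin I, (M' k i)ᴴ * M' k i = 1 := by
    rw [← hM]
    exact Finset.sum_congr rfl fun k _ => (hpad k (fun X => Xᴴ * X) (by simp)).symm
  have hrhok : ∀ k, ∑ i : Fin (I' k), M k i * ρ * (M k i)ᴴ = ∑ i : Fin I, M' k i * ρ * (M' k i)ᴴ :=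
    fun k => hpad k (fun X => X * ρ * Xᴴ) (by simp)
  set q : Fin K → n → Fin I → ℝ :=
    fun k r i => ∑ s, Complex.normSq ((M' k i * A) s r) with hqdef
  have hq0 : ∀ k r i, 0 ≤ q k r i :=
    fun k r i => Finset.sum_nonneg fun s _ => Complex.normSq_nonneg _
  set t : Fin K → n → ℝ := fun k r => ∑ i, q k r i with htdef
  have ht0 : ∀ k r, 0 ≤ t k r := fun k r => Finset.sum_nonneg fun i _ => hq0 k r i
  have hNN : ∀ (X : Matrix n n ℂ), X * ρ * Xᴴ = (X * A) * (X * A)ᴴ := by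
    intro X
    rw [conjTranspose_mul X A, ← hAA]
    simp only [Matrix.mul_assoc]
  have htrace : ∀ (N : Matrix n n ℂ),
      (N * Nᴴ).trace = ((∑ r, ∑ s, Complex.normSq (N s r) : ℝ) : ℂ) := by
    intro N
    rw [Matrix.trace, Finset.sum_comm (γ := n)]
    push_cast
    refine Finset.sum_congr rfl fun s _ => ?_
    rw [Matrix.diag_apply, Matrix.mul_apply]
    refine Finset.sum_congr rfl fun r _ => ?_
    rw [conjTranspose_apply, Complex.star_def, Complex.mul_conj]
  have hpk : ∀ k, p k = ∑ r, t k r := by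
    intro k
    show ((∑ i : Fin (I' k), M k i * ρ * (M k i)ᴴ).trace).re = _
    rw [hrhok k, Matrix.trace_sum]
    rw [Finset.sum_congr rfl (fun (i : Fin I) _ => by rw [hNN (M' k i), htrace])]
    rw [← Complex.ofReal_sum, Complex.ofReal_re, Finset.sum_comm]
  have hcolsum : ∀ (N : Matrix n n ℂ) (r : n),
      (Nᴴ * N) r r = ((∑ s, Complex.normSq (N s r) : ℝ) : ℂ) := by
    intro N r
    rw [Matrix.mul_apply]
    push_cast
    refine Finset.sum_congr rfl fun s _ => ?_
    rw [conjTranspose_apply, Complex.star_def, mul_comm, Complex.mul_conj]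
  have hsum_t : ∀ r, ∑ k, t k r = lam r := by
    intro r
    have h1 : ∀ (k : Fin K) (i : Fin I), (M' k i * A)ᴴ * (M' k i * A)
        = Aᴴ * ((M' k i)ᴴ * M' k i * A) := by
      intro k i
      rw [conjTranspose_mul]
      simp only [Matrix.mul_assoc]
    have h2 : ∑ k, ∑ i : Fin I, (M' k i * A)ᴴ * (M' k i * A)
        = diagonal (fun r => ((lam r : ℝ) : ℂ)) := by
      calc ∑ k, ∑ i : Fin I, (M' k i * A)ᴴ * (M' k i * A)
          = Aᴴ * ((∑ k, ∑ i : Fin I, (M' k i)ᴴ * M' k i) * A) := by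
            simp only [h1]
            rw [Finset.sum_mul, Finset.mul_sum]
            refine Finset.sum_congr rfl fun k _ => ?_
            rw [Finset.sum_mul, Finset.mul_sum]
        _ = diagonal (fun r => ((lam r : ℝ) : ℂ)) := by
            rw [hM'sum, Matrix.one_mul, hAtA]
    have h3 : ∀ (k : Fin K) (i : Fin I), q k r i = (((M' k i * A)ᴴ * (M' k i * A)) r r).re := by
      intro k i
      rw [hcolsum, Complex.ofReal_re]
    calc ∑ k, t k r = ∑ k, ∑ i, (((M' k i * A)ᴴ * (M' k i * A)) r r).re :=
          Finset.sum_congr rfl fun k _ => Finset.sum_congr rfl fun i _ => h3 k i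
      _ = ((∑ k, ∑ i : Fin I, (M' k i * A)ᴴ * (M' k i * A)) r r).re := by
          simp [Matrix.sum_apply, Complex.re_sum]
      _ = lam r := by rw [h2]; simp
  have hlamsum : ∑ r, lam r = 1 := by
    have h : ((∑ r, lam r : ℝ) : ℂ) = 1 := by
      have h1 : (diagonal (fun r => ((lam r : ℝ) : ℂ))).trace = ((∑ r, lam r : ℝ) : ℂ) := by
        rw [Matrix.trace_diagonal]
        push_cast
        rfl
      rw [← h1, ← hAtA, Matrix.trace_mul_comm, hAA, hρtr]
    exact_mod_cast h
  have hp0 : ∀ k, 0 ≤ p k := fun k => (hpk k) ▸ Finset.sum_nonneg fun r _ => ht0 k r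
  have htzero : ∀ k, ¬ 0 < p k → ∀ r, t k r = 0 := by
    intro k hk r
    have hpk0 : (0 : ℝ) = ∑ r, t k r := by
      rw [← hpk k]
      exact (le_antisymm (not_lt.mp hk) (hp0 k)).symm
    exact (Finset.sum_eq_zero_iff_of_nonneg (fun r _ => ht0 k r)).mp hpk0.symm r (Finset.mem_univ r)
  set F : Finset (Fin K) := Finset.univ.filter (fun k => 0 < p k) with hF
  have hsum_tF : ∀ r, ∑ k ∈ F, t k r = lam r := by
    intro r
    rw [hF, Finset.sum_filter_of_ne fun k _ hne => by
      by_contra hk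
      exact hne (htzero k hk r)]
    exact hsum_t r
  have hpF : ∑ k ∈ F, p k = 1 := by
    have hall : ∑ k, p k = 1 := by
      calc ∑ k, p k = ∑ k, ∑ r, t k r := Finset.sum_congr rfl fun k _ => hpk k
        _ = ∑ r, ∑ k, t k r := Finset.sum_comm
        _ = ∑ r, lam r := Finset.sum_congr rfl fun r _ => hsum_t r
        _ = 1 := hlamsum
    rw [hF, Finset.sum_filter_of_ne fun k _ hne => lt_of_le_of_ne (hp0 k) (Ne.symm hne)]
    exact hall
  -- the purified coefficient matrix for each outcome
  set B : Fin K → Matrix n (n × Fin I) ℂ := fun k => Matrix.of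
    (fun s c => (((Real.sqrt (p k))⁻¹ : ℝ) : ℂ) * (M' k c.2 * A) s c.1) with hBdef
  have hc2 : ∀ k, (((Real.sqrt (p k))⁻¹ : ℝ) : ℂ) * (((Real.sqrt (p k))⁻¹ : ℝ) : ℂ)
      = (((p k)⁻¹ : ℝ) : ℂ) := by
    intro k
    rw [← Complex.ofReal_mul, ← mul_inv, Real.mul_self_sqrt (hp0 k)]
  have hBB : ∀ k, B k * (B k)ᴴ = (((p k)⁻¹ : ℝ) : ℂ) • ∑ i : Fin I, M' k i * ρ * (M' k i)ᴴ := by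
    intro k
    ext s s'
    rw [Matrix.mul_apply, Matrix.smul_apply, Matrix.sum_apply]
    have hNi : ∀ i : Fin I, (M' k i * ρ * (M' k i)ᴴ) s s'
        = ∑ r, (M' k i * A) s r * (starRingEnd ℂ) ((M' k i * A) s' r) := by
      intro i
      rw [hNN (M' k i), Matrix.mul_apply]
      exact Finset.sum_congr rfl fun r _ => by rw [conjTranspose_apply, Complex.star_def]
    calc ∑ c : n × Fin I, B k s c * (B k)ᴴ c s'
        = ∑ c : n × Fin I, (((p k)⁻¹ : ℝ) : ℂ)
            * ((M' k c.2 * A) s c.1 * (starRingEnd ℂ) ((M' k c.2 * A) s' c.1)) := by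
          refine Finset.sum_congr rfl fun c _ => ?_
          rw [conjTranspose_apply, hBdef]
          simp only [Matrix.of_apply, star_mul', Complex.star_def, Complex.conj_ofReal]
          rw [← hc2 k]
          ring
      _ = (((p k)⁻¹ : ℝ) : ℂ) * ∑ i : Fin I, (M' k i * ρ * (M' k i)ᴴ) s s' := by
          rw [Finset.mul_sum, Fintype.sum_prod_type, Finset.sum_comm]
          refine Finset.sum_congr rfl fun i _ => ?_
          rw [hNi i, Finset.mul_sum]
  have hcols : ∀ k (c : n × Fin I), ∑ s, Complex.normSq (B k s c) = (p k)⁻¹ * q k c.1 c.2 := by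
    intro k c
    rw [hqdef]
    simp only
    rw [Finset.mul_sum]
    refine Finset.sum_congr rfl fun s _ => ?_
    rw [hBdef]
    simp only [Matrix.of_apply]
    rw [Complex.normSq_mul, Complex.normSq_ofReal, ← mul_inv, Real.mul_self_sqrt (hp0 k)]
  have hlogI : 0 ≤ Real.log I := by
    rcases Nat.eq_zero_or_pos I with h | h
    · simp [h]
    · exact Real.log_nonneg (by exact_mod_cast h)
  have hmain : ∀ k ∈ F,
      p k * vNEntropy ((((p k)⁻¹ : ℝ) : ℂ) • ∑ i, M k i * ρ * (M k i)ᴴ)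
        ≤ ∑ r, (p k * Real.negMulLog ((p k)⁻¹ * t k r) + t k r * Real.log I) := by
    intro k hk
    have hpkpos : 0 < p k := (Finset.mem_filter.mp hk).2
    have hmat : ((((p k)⁻¹ : ℝ) : ℂ) • ∑ i, M k i * ρ * (M k i)ᴴ) = B k * (B k)ᴴ := by
      rw [hrhok k, hBB k]
    rw [hmat]
    calc p k * vNEntropy (B k * (B k)ᴴ)
        ≤ p k * ∑ c : n × Fin I, Real.negMulLog ((p k)⁻¹ * q k c.1 c.2) := by
          refine mul_le_mul_of_nonneg_left ?_ (hp0 k)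
          exact (vNEntropy_mul_conjTranspose_le (B k)).trans_eq
            (Finset.sum_congr rfl fun c _ => by rw [hcols k c])
      _ = ∑ r, p k * ∑ i, Real.negMulLog ((p k)⁻¹ * q k r i) := by
          rw [Fintype.sum_prod_type, Finset.mul_sum]
      _ ≤ ∑ r, (p k * Real.negMulLog ((p k)⁻¹ * t k r) + t k r * Real.log I) := by
          refine Finset.sum_le_sum fun r _ => ?_
          have h2 := sum_negMulLog_le (fun i => (p k)⁻¹ * q k r i)
            (fun i => mul_nonneg (inv_nonneg.2 (hp0 k)) (hq0 k r i))
          have h3 : ∑ i, (p k)⁻¹ * q k r i = (p k)⁻¹ * t k r := by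
            rw [htdef, ← Finset.mul_sum]
          rw [h3] at h2
          have h4 := mul_le_mul_of_nonneg_left h2 (hp0 k)
          refine h4.trans (le_of_eq ?_)
          rw [mul_add, ← mul_assoc, ← mul_assoc, mul_inv_cancel₀ (ne_of_gt hpkpos), one_mul]
  calc ∑ k ∈ F, p k * vNEntropy ((((p k)⁻¹ : ℝ) : ℂ) • ∑ i, M k i * ρ * (M k i)ᴴ)
      ≤ ∑ k ∈ F, ∑ r, (p k * Real.negMulLog ((p k)⁻¹ * t k r) + t k r * Real.log I) :=
        Finset.sum_le_sum hmain
    _ = (∑ r, ∑ k ∈ F, p k * Real.negMulLog ((p k)⁻¹ * t k r))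
        + (∑ k ∈ F, p k) * Real.log I := by
        have e1 : ∀ k ∈ F, ∑ r, (p k * Real.negMulLog ((p k)⁻¹ * t k r) + t k r * Real.log I)
            = (∑ r, p k * Real.negMulLog ((p k)⁻¹ * t k r)) + p k * Real.log I := by
          intro k _
          rw [Finset.sum_add_distrib, ← Finset.sum_mul, ← hpk k]
        rw [Finset.sum_congr rfl e1, Finset.sum_add_distrib, ← Finset.sum_mul, Finset.sum_comm]
    _ ≤ Real.log I + vNEntropy ρ := by
        rw [hpF, one_mul, add_comm]
        refine add_le_add_right ?_ (Real.log I)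
        have hvN : vNEntropy ρ = ∑ r, Real.negMulLog (lam r) := by
          rw [vNEntropy, dif_pos hH]
        rw [hvN]
        refine Finset.sum_le_sum fun r _ => ?_
        have hj := jensen_negMulLog F (fun k => p k) (fun k => (p k)⁻¹ * t k r)
          (fun k _ => hp0 k) (fun k _ => mul_nonneg (inv_nonneg.2 (hp0 k)) (ht0 k r))
          (le_of_eq hpF)
        refine hj.trans (le_of_eq ?_)
        congr 1
        calc ∑ k ∈ F, p k * ((p k)⁻¹ * t k r) = ∑ k ∈ F, t k r := by
              refine Finset.sum_congr rfl fun k hk => ?_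
              have hne : p k ≠ 0 := ne_of_gt (Finset.mem_filter.mp hk).2
              rw [← mul_assoc, mul_inv_cancel₀ hne, one_mul]
          _ = lam r := hsum_tF r
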